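/- Fix d ≥ 1 and D = {0,…,d}. Let A ∈ ℝ^{m×n} with m ≤ 3. If A has no forbidden pattern, then A is universally connected. -/

import Mathlib

open Matrix Finset
open scoped Classical

/-- `A` has a forbidden pattern: there are `lam ≥ 1` rows and columns, with
orderings (injective enumerations) `r`, `c`, such that in column `c l` all rows
of the pattern other than `r l`, `r (l+1)` vanish (cyclically), and
`A (r l) (c l) * A (r (l+1)) (c l) < 0` for every `l`. -/
def HasFP {m n : ℕ} (A : Matrix (Fin m) (Fin n) ℝ) : Prop :=
  ∃ lam : ℕ, ∃ r : Fin (lam + 1) → Fin m, ∃ c : Fin (lam + 1) → Fin n,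
    Function.Injective r ∧ Function.Injective c ∧
    (∀ l k : Fin (lam + 1), k ≠ l → k ≠ l + 1 → A (r k) (c l) = 0) ∧
    (∀ l : Fin (lam + 1), A (r l) (c l) * A (r (l + 1)) (c l) < 0)

/-- `A`, restricted to the set `S` of remaining columns, can be eliminated at column `j`. -/
def CanElim {m n : ℕ} (A : Matrix (Fin m) (Fin n) ℝ) (S : Finset (Fin n)) (j : Fin n) : Prop :=
  (∀ i, 0 < A i j → ∀ j' ∈ S, j' ≠ j → A i j' = 0) ∨
  (∀ i, A i j < 0 → ∀ j' ∈ S, j' ≠ j → A i j' = 0)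

/-- `A` has an elimination ordering. -/
def HasEO {m n : ℕ} (A : Matrix (Fin m) (Fin n) ℝ) : Prop :=
  ∃ e : Fin n ≃ Fin n, ∀ t : Fin n,
    CanElim A (Finset.univ.filter fun c => ∀ s : Fin n, s < t → e s ≠ c) (e t)

/-- `x ∈ {0,…,d}ⁿ` is a feasible solution of the integer linear system `A x ≥ b`. -/
def Feas {m n : ℕ} (d : ℕ) (A : Matrix (Fin m) (Fin n) ℝ) (b : Fin m → ℝ)
    (x : Fin n → ℕ) : Prop :=
  (∀ j, x j ≤ d) ∧ ∀ i, b i ≤ ∑ j, A i j * (x j : ℝ)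

/-- Adjacency in the solution graph `G(A,b)`: both endpoints are feasible and
their Hamming distance is `1`. -/
def SGAdj {m n : ℕ} (d : ℕ) (A : Matrix (Fin m) (Fin n) ℝ) (b : Fin m → ℝ)
    (x y : Fin n → ℕ) : Prop :=
  Feas d A b x ∧ Feas d A b y ∧ hammingDist x y = 1

/-- The solution graph `G(A,b)` is connected. -/
def SGConn {m n : ℕ} (d : ℕ) (A : Matrix (Fin m) (Fin n) ℝ) (b : Fin m → ℝ) : Prop :=
  ∀ x y : Fin n → ℕ, Feas d A b x → Feas d A b y →
    Relation.ReflTransGen (SGAdj d A b) x y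

/-- `A` is universally connected. -/
def UnivConn {m n : ℕ} (d : ℕ) (A : Matrix (Fin m) (Fin n) ℝ) : Prop :=
  ∀ b : Fin m → ℝ, SGConn d A b

lemma fp2 {m n : ℕ} (A : Matrix (Fin m) (Fin n) ℝ) {a b : Fin m} {p q : Fin n} (hpq : p ≠ q)
    (h1 : A a p * A b p < 0) (h2 : A a q * A b q < 0) : HasFP A := by
  have hab : a ≠ b := by rintro rfl; nlinarith [mul_self_nonneg (A a p)]
  refine ⟨1, ![a, b], ![p, q], ?_, ?_, ?_, ?_⟩
  · intro i j hij; fin_cases i <;> fin_cases j <;> simp_all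
  · intro i j hij; fin_cases i <;> fin_cases j <;> simp_all
  · intro l k h1 h2; exfalso; fin_cases l <;> fin_cases k <;> simp_all <;> omega
  · intro l; fin_cases l <;> simp_all <;> linarith [mul_comm (A a q) (A b q)]

lemma fp3 {m n : ℕ} (A : Matrix (Fin m) (Fin n) ℝ) {a b c : Fin m} {p q s : Fin n}
    (h1 : A a p * A b p < 0) (h2 : A b q * A c q < 0) (h3 : A c s * A a s < 0)
    (z1 : A c p = 0) (z2 : A a q = 0) (z3 : A b s = 0) : HasFP A := by
  have hab : a ≠ b := by rintro rfl; nlinarith [mul_self_nonneg (A a p)]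
  have hbc : b ≠ c := by rintro rfl; nlinarith [mul_self_nonneg (A b q)]
  have hac : a ≠ c := by rintro rfl; nlinarith [mul_self_nonneg (A a s)]
  have hbp : A b p ≠ 0 := by intro h0; rw [h0] at h1; simp at h1
  have hcq : A c q ≠ 0 := by intro h0; rw [h0] at h2; simp at h2
  have has : A a s ≠ 0 := by intro h0; rw [h0] at h3; simp at h3
  have hpq : p ≠ q := by rintro rfl; exact hcq z1
  have hps : p ≠ s := by rintro rfl; exact hbp z3
  have hqs : q ≠ s := by rintro rfl; exact has z2
  refine ⟨2, ![a, b, c], ![p, q, s], ?_, ?_, ?_, ?_⟩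
  · intro i j hij; fin_cases i <;> fin_cases j <;> simp_all
  · intro i j hij; fin_cases i <;> fin_cases j <;> simp_all
  · intro l k g1 g2; fin_cases l <;> fin_cases k <;> simp_all <;> omega
  · intro l; fin_cases l <;> simp_all

lemma mem3 {m : ℕ} (hm : m ≤ 3) {a b c x : Fin m} (hab : a ≠ b) (hac : a ≠ c) (hbc : b ≠ c) :
    x = a ∨ x = b ∨ x = c := by
  by_contra hx
  push_neg at hx
  have h4 : ({x, a, b, c} : Finset (Fin m)).card ≤ m := by
    simpa using Finset.card_le_univ ({x, a, b, c} : Finset (Fin m))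
  rw [Finset.card_insert_of_notMem (by simp [hx.1, hx.2.1, hx.2.2]),
    Finset.card_insert_of_notMem (by simp [hab, hac]),
    Finset.card_insert_of_notMem (by simp [hbc]), Finset.card_singleton] at h4
  omega

lemma exists_elim {m n : ℕ} (hm : m ≤ 3) (A : Matrix (Fin m) (Fin n) ℝ) (hFP : ¬ HasFP A)
    (S : Finset (Fin n)) (hS : S.Nonempty) : ∃ j ∈ S, CanElim A S j := by
  by_contra hcon
  push_neg at hcon
  have H : ∀ j ∈ S, (∃ i, 0 < A i j ∧ ∃ j' ∈ S, j' ≠ j ∧ A i j' ≠ 0) ∧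
      (∃ i, A i j < 0 ∧ ∃ j' ∈ S, j' ≠ j ∧ A i j' ≠ 0) := by
    intro j hj
    have := hcon j hj
    unfold CanElim at this
    push_neg at this
    exact this
  -- FP2': same pair serving two columns gives contradiction
  have FP2' : ∀ (a b : Fin m) (p q : Fin n), p ≠ q →
      A a p * A b p < 0 → A a q * A b q < 0 → False :=
    fun a b p q hpq h1 h2 => hFP (fp2 A hpq h1 h2)
  have L1 : ∀ j ∈ S, ∀ x, A x j ≠ 0 →
      ∃ y, A x j * A y j < 0 ∧ ∃ j' ∈ S, j' ≠ j ∧ A y j' ≠ 0 := by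
    intro j hj x hx
    obtain ⟨⟨u, hu, hub⟩, ⟨v, hv, hvb⟩⟩ := H j hj
    rcases hx.lt_or_gt with hneg | hpos
    · exact ⟨u, mul_neg_of_neg_of_pos hneg hu, hub⟩
    · exact ⟨v, mul_neg_of_pos_of_neg hpos hv, hvb⟩
  obtain ⟨j0, hj0⟩ := hS
  obtain ⟨⟨a, ha, ja, hjaS, hjane, haja⟩, ⟨b, hb, jb, hjbS, hjbne, hbjb⟩⟩ := H j0 hj0
  have hab0 : A a j0 * A b j0 < 0 := mul_neg_of_pos_of_neg ha hb
  have hab : a ≠ b := by rintro rfl; nlinarith [mul_self_nonneg (A a j0)]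
  -- step B : column ja, pair {a, c}
  obtain ⟨c, hc1, jc, hjcS, hjcne, hcjc⟩ := L1 ja hjaS a haja
  have hac : a ≠ c := by rintro rfl; nlinarith [mul_self_nonneg (A a ja)]
  have hbc : b ≠ c := by
    rintro rfl
    exact FP2' a b ja j0 hjane hc1 hab0
  -- step C : column jc, pair {c, w}
  obtain ⟨w, hw1, jw, hjwS, hjwne, hwjw⟩ := L1 jc hjcS c hcjc
  have hwc : w ≠ c := by rintro rfl; nlinarith [mul_self_nonneg (A w jc)]
  have hwb : w = b := by
    rcases mem3 hm hab hac hbc (x := w) with hwa | hwb | hwc'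
    · exfalso
      rw [hwa] at hw1
      exact FP2' a c ja jc hjcne.symm hc1 (by linarith [mul_comm (A c jc) (A a jc)])
    · exact hwb
    · exact absurd hwc' hwc
  rw [hwb] at hw1
  -- hw1 : A c jc * A b jc < 0
  by_cases hj0c : jc = j0
  · -- contradiction via b's busy column jb
    rw [hj0c] at hw1
    obtain ⟨z, hz1, _⟩ := L1 jb hjbS b hbjb
    have hzb : z ≠ b := by rintro rfl; nlinarith [mul_self_nonneg (A z jb)]
    rcases mem3 hm hab hac hbc (x := z) with hza | hzb' | hzc
    · rw [hza] at hz1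
      exact FP2' a b jb j0 hjbne (by linarith [mul_comm (A b jb) (A a jb)]) hab0
    · exact absurd hzb' hzb
    · rw [hzc] at hz1
      exact FP2' b c jb j0 hjbne hz1 (by linarith [mul_comm (A c j0) (A b j0)])
  · -- three distinct columns j0, ja, jc : assemble λ=3 pattern
    have hz1 : A c j0 = 0 := by
      by_contra hne
      rcases lt_or_gt_of_ne hne with hlt | hgt
      · exact FP2' a c j0 ja hjane.symm (mul_neg_of_pos_of_neg ha hlt) hc1
      · exact FP2' c b j0 jc (fun e => hj0c e.symm) (mul_neg_of_pos_of_neg hgt hb)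
          (by linarith [mul_comm (A c jc) (A b jc)])
    have hz2 : A b ja = 0 := by
      by_contra hne
      rcases lt_or_gt_of_ne haja with h1 | h1 <;> rcases lt_or_gt_of_ne hne with h2 | h2
      · have hc2 : 0 < A c ja := by nlinarith
        exact FP2' b c ja jc hjcne.symm (mul_neg_of_neg_of_pos h2 hc2)
          (by linarith [mul_comm (A c jc) (A b jc)])
      · exact FP2' a b ja j0 hjane (mul_neg_of_neg_of_pos h1 h2) hab0
      · exact FP2' a b ja j0 hjane (mul_neg_of_pos_of_neg h1 h2) hab0
      · have hc2 : A c ja < 0 := by nlinarith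
        exact FP2' b c ja jc hjcne.symm (mul_neg_of_pos_of_neg h2 hc2)
          (by linarith [mul_comm (A c jc) (A b jc)])
    have hz3 : A a jc = 0 := by
      by_contra hne
      have hbjc : A b jc ≠ 0 := by intro h0; rw [h0] at hw1; simp at hw1
      rcases lt_or_gt_of_ne hbjc with h1 | h1 <;> rcases lt_or_gt_of_ne hne with h2 | h2
      · have hc2 : 0 < A c jc := by nlinarith
        exact FP2' a c jc ja hjcne (mul_neg_of_neg_of_pos h2 hc2) hc1
      · exact FP2' a b jc j0 hj0c (mul_neg_of_pos_of_neg h2 h1) hab0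
      · exact FP2' a b jc j0 hj0c (mul_neg_of_neg_of_pos h2 h1) hab0
      · have hc2 : A c jc < 0 := by nlinarith
        exact FP2' a c jc ja hjcne (mul_neg_of_pos_of_neg h2 hc2) hc1
    exact hFP (fp3 A (p := j0) (q := jc) (s := ja) hab0
      (by linarith [mul_comm (A c jc) (A b jc)])
      (by linarith [mul_comm (A a ja) (A c ja)]) hz1 hz3 hz2)

variable {m n : ℕ} {A : Matrix (Fin m) (Fin n) ℝ} {b : Fin m → ℝ} {d : ℕ}


lemma feas_update_min {S : Finset (Fin n)} {j : Fin n} (hj : j ∈ S)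
    (hP : ∀ i, 0 < A i j → ∀ j' ∈ S, j' ≠ j → A i j' = 0)
    {x y : Fin n → ℕ} (hx : Feas d A b x) (hy : Feas d A b y)
    (hagree : ∀ j' ∉ S, x j' = y j') :
    Feas d A b (Function.update x j (min (x j) (y j))) := by
  constructor
  · intro j'
    by_cases hjj : j' = j
    · subst hjj
      simpa using le_trans (min_le_left _ _) (hx.1 j')
    · simpa [Function.update_of_ne hjj] using hx.1 j'
  · intro i
    have hsum : ∀ z : Fin n → ℕ, ∑ j', A i j' * (z j' : ℝ)
        = A i j * (z j : ℝ) + ∑ j' ∈ univ.erase j, A i j' * (z j' : ℝ) := by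
      intro z
      exact (Finset.add_sum_erase _ _ (mem_univ j)).symm
    have hupd : ∑ j', A i j' * ((Function.update x j (min (x j) (y j)) j' : ℕ) : ℝ)
        = A i j * ((min (x j) (y j) : ℕ) : ℝ) + ∑ j' ∈ univ.erase j, A i j' * (x j' : ℝ) := by
      rw [hsum]
      congr 1
      · simp
      · refine Finset.sum_congr rfl fun j' hj' => ?_
        rw [Function.update_of_ne (Finset.mem_erase.mp hj').1]
    rw [hupd]
    rcases le_or_gt (A i j) 0 with hA | hA
    · have hle : ((min (x j) (y j) : ℕ) : ℝ) ≤ (x j : ℝ) := by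
        exact_mod_cast min_le_left (x j) (y j)
      have h1 : A i j * (x j : ℝ) ≤ A i j * ((min (x j) (y j) : ℕ) : ℝ) :=
        mul_le_mul_of_nonpos_left hle hA
      have h2 := hx.2 i
      rw [hsum x] at h2
      linarith
    · have heq : ∑ j' ∈ univ.erase j, A i j' * (x j' : ℝ)
          = ∑ j' ∈ univ.erase j, A i j' * (y j' : ℝ) := by
        refine Finset.sum_congr rfl fun j' hj' => ?_
        have hne : j' ≠ j := (Finset.mem_erase.mp hj').1
        by_cases hjS : j' ∈ S
        · rw [hP i hA j' hjS hne]; ring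
        · rw [hagree j' hjS]
      rcases min_choice (x j) (y j) with hmin | hmin
      · rw [hmin]
        have h2 := hx.2 i
        rw [hsum x] at h2
        linarith
      · rw [hmin, heq]
        have h2 := hy.2 i
        rw [hsum y] at h2
        linarith

lemma feas_update_max {S : Finset (Fin n)} {j : Fin n} (hj : j ∈ S)
    (hN : ∀ i, A i j < 0 → ∀ j' ∈ S, j' ≠ j → A i j' = 0)
    {x y : Fin n → ℕ} (hx : Feas d A b x) (hy : Feas d A b y)
    (hagree : ∀ j' ∉ S, x j' = y j') :
    Feas d A b (Function.update x j (max (x j) (y j))) := by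
  constructor
  · intro j'
    by_cases hjj : j' = j
    · subst hjj
      simpa using max_le (hx.1 j') (hy.1 j')
    · simpa [Function.update_of_ne hjj] using hx.1 j'
  · intro i
    have hsum : ∀ z : Fin n → ℕ, ∑ j', A i j' * (z j' : ℝ)
        = A i j * (z j : ℝ) + ∑ j' ∈ univ.erase j, A i j' * (z j' : ℝ) := by
      intro z
      exact (Finset.add_sum_erase _ _ (mem_univ j)).symm
    have hupd : ∑ j', A i j' * ((Function.update x j (max (x j) (y j)) j' : ℕ) : ℝ)
        = A i j * ((max (x j) (y j) : ℕ) : ℝ) + ∑ j' ∈ univ.erase j, A i j' * (x j' : ℝ) := by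
      rw [hsum]
      congr 1
      · simp
      · refine Finset.sum_congr rfl fun j' hj' => ?_
        rw [Function.update_of_ne (Finset.mem_erase.mp hj').1]
    rw [hupd]
    rcases le_or_gt 0 (A i j) with hA | hA
    · have hle : (x j : ℝ) ≤ ((max (x j) (y j) : ℕ) : ℝ) := by
        exact_mod_cast le_max_left (x j) (y j)
      have h1 : A i j * (x j : ℝ) ≤ A i j * ((max (x j) (y j) : ℕ) : ℝ) :=
        mul_le_mul_of_nonneg_left hle hA
      have h2 := hx.2 i
      rw [hsum x] at h2
      linarith
    · have heq : ∑ j' ∈ univ.erase j, A i j' * (x j' : ℝ)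
          = ∑ j' ∈ univ.erase j, A i j' * (y j' : ℝ) := by
        refine Finset.sum_congr rfl fun j' hj' => ?_
        have hne : j' ≠ j := (Finset.mem_erase.mp hj').1
        by_cases hjS : j' ∈ S
        · rw [hN i hA j' hjS hne]; ring
        · rw [hagree j' hjS]
      rcases max_choice (x j) (y j) with hmax | hmax
      · rw [hmax]
        have h2 := hx.2 i
        rw [hsum x] at h2
        linarith
      · rw [hmax, heq]
        have h2 := hy.2 i
        rw [hsum y] at h2
        linarith

lemma sg_step {x : Fin n → ℕ} {j : Fin n} {t : ℕ}
    (hx : Feas d A b x) (hx' : Feas d A b (Function.update x j t)) :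
    Relation.ReflTransGen (SGAdj d A b) x (Function.update x j t) := by
  by_cases ht : t = x j
  · rw [ht, Function.update_eq_self]
  · refine Relation.ReflTransGen.single ⟨hx, hx', ?_⟩
    have : ({i | x i ≠ Function.update x j t i} : Finset (Fin n)) = {j} := by
      ext i
      by_cases hij : i = j
      · subst hij; simpa using fun e => ht e.symm
      · simp [hij, Function.update_of_ne hij]
    rw [hammingDist, this, Finset.card_singleton]

lemma sgadj_symm : Symmetric (SGAdj d A b) := by
  intro x y ⟨h1, h2, h3⟩
  exact ⟨h2, h1, by rwa [hammingDist_comm]⟩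
theorem stmt14 {m n : ℕ} (d : ℕ) (hd : 1 ≤ d) (hm : m ≤ 3)
    (A : Matrix (Fin m) (Fin n) ℝ) (h : ¬ HasFP A) : UnivConn d A := by
  intro b x0 y0 hx0 hy0
  suffices H : ∀ S : Finset (Fin n), ∀ x y : Fin n → ℕ, Feas d A b x → Feas d A b y →
      (∀ j ∉ S, x j = y j) → Relation.ReflTransGen (SGAdj d A b) x y by
    exact H univ x0 y0 hx0 hy0 (by simp)
  intro S
  induction S using Finset.strongInduction with
  | _ S ih =>
    intro x y hx hy hagree
    by_cases hxy : x = y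
    · rw [hxy]
    · have hSne : S.Nonempty := by
        rcases S.eq_empty_or_nonempty with rfl | hne
        · exact absurd (funext fun j => hagree j (by simp)) hxy
        · exact hne
      obtain ⟨j, hjS, hcan⟩ := exists_elim hm A h S hSne
      have key : ∀ t : ℕ, Feas d A b (Function.update x j t) →
          Feas d A b (Function.update y j t) →
          Relation.ReflTransGen (SGAdj d A b) x y := by
        intro t hx' hy'
        have hagree' : ∀ j' ∉ S.erase j,
            Function.update x j t j' = Function.update y j t j' := by
          intro j' hj'
          by_cases hjj : j' = j
          · subst hjj; simp
          · rw [Function.update_of_ne hjj, Function.update_of_ne hjj]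
            exact hagree j' fun hS => hj' (Finset.mem_erase.mpr ⟨hjj, hS⟩)
        have hrec := ih (S.erase j) (Finset.erase_ssubset hjS)
          (Function.update x j t) (Function.update y j t) hx' hy' hagree'
        exact ((sg_step hx hx').trans hrec).trans
          (Std.Symm.symm (self := @Relation.ReflTransGen.symmetric _ _ ⟨fun _ _ h => sgadj_symm h⟩) _ _ (sg_step hy hy'))
      rcases hcan with hP | hN
      · refine key (min (x j) (y j)) (feas_update_min hjS hP hx hy hagree) ?_
        rw [min_comm]
        exact feas_update_min hjS hP hy hx fun j' hj' => (hagree j' hj').symm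
      · refine key (max (x j) (y j)) (feas_update_max hjS hN hx hy hagree) ?_
        rw [max_comm]
        exact feas_update_max hjS hN hy hx fun j' hj' => (hagree j' hj').symm
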